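/- Let g : [a,b] × [c,d] → ℝ be co-ordinated convex and f : [a,b] × [c,d] → ℝ be co-ordinated g-convex dominated, with a < b, c < d, both integrable. Then |(f(a,c)+f(a,d)+f(b,c)+f(b,d))/4 - (1/((b-a)(d-c))) ∫_a^b ∫_c^d f(x,y) dy dx| ≤ (g(a,c)+g(a,d)+g(b,c)+g(b,d))/4 - (1/((b-a)(d-c))) ∫_a^b ∫_c^d g(x,y) dy dx. -/

import Mathlib

open MeasureTheory



def ConvexDominated (I : Set ℝ) (ψ φ : ℝ → ℝ) : Prop :=
  ∀ u ∈ I, ∀ v ∈ I, ∀ l : ℝ, l ∈ Set.Icc (0:ℝ) 1 →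
    |l * φ u + (1 - l) * φ v - φ (l * u + (1 - l) * v)| ≤
      l * ψ u + (1 - l) * ψ v - ψ (l * u + (1 - l) * v)

def CoordConvexDominated (a b c d : ℝ) (g f : ℝ → ℝ → ℝ) : Prop :=
  (∀ x ∈ Set.Icc a b, ConvexDominated (Set.Icc c d) (fun u => g x u) (fun u => f x u)) ∧
  (∀ y ∈ Set.Icc c d, ConvexDominated (Set.Icc a b) (fun w => g w y) (fun w => f w y))

def CoordConvexOn (a b c d : ℝ) (f : ℝ → ℝ → ℝ) : Prop :=
  (∀ y ∈ Set.Icc c d, ConvexOn ℝ (Set.Icc a b) (fun x => f x y)) ∧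
  (∀ x ∈ Set.Icc a b, ConvexOn ℝ (Set.Icc c d) (fun y => f x y))

lemma oneD (a b : ℝ) (hab : a < b) :
    ∫ x in Set.Icc a b, (b - x) / (b - a) = (b - a) / 2 := by
  rw [MeasureTheory.integral_Icc_eq_integral_Ioc, ← intervalIntegral.integral_of_le hab.le]
  have h1 : IntervalIntegrable (fun _ : ℝ => b) volume a b := intervalIntegrable_const
  have h2 : IntervalIntegrable (fun x : ℝ => x) volume a b := intervalIntegral.intervalIntegrable_id
  simp only [div_eq_mul_inv]
  rw [intervalIntegral.integral_mul_const, intervalIntegral.integral_sub h1 h2,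
    intervalIntegral.integral_const, integral_id]
  have : b - a ≠ 0 := by linarith
  field_simp
  ring

lemma tcont (a b : ℝ) : Continuous (fun x : ℝ => (b - x) / (b - a)) :=
  (continuous_const.sub continuous_id).div_const _

lemma tInt (a b : ℝ) : Integrable (fun x : ℝ => (b - x) / (b - a)) (volume.restrict (Set.Icc a b)) :=
  ((tcont a b).continuousOn).integrableOn_compact isCompact_Icc

lemma oneD' (a b : ℝ) (hab : a < b) :
    ∫ x in Set.Icc a b, (1 - (b - x) / (b - a)) = (b - a) / 2 := by
  have hc : ∫ x in Set.Icc a b, (1 : ℝ) = b - a := by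
    simp [Real.volume_Icc, hab.le]
  rw [MeasureTheory.integral_sub (integrable_const (μ := volume.restrict (Set.Icc a b)) (1:ℝ))
    (tInt a b), hc, oneD a b hab]
  ring

lemma tmem {a b x : ℝ} (hab : a < b) (hx : x ∈ Set.Icc a b) :
    (b - x) / (b - a) ∈ Set.Icc (0:ℝ) 1 ∧
      (b - x) / (b - a) * a + (1 - (b - x) / (b - a)) * b = x := by
  have hba : (0:ℝ) < b - a := by linarith
  obtain ⟨h1, h2⟩ := hx
  refine ⟨⟨div_nonneg (by linarith) hba.le, by rw [div_le_one hba]; linarith⟩, ?_⟩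
  field_simp
  ring

lemma convex_slice {I : Set ℝ} {φ : ℝ → ℝ} (h : ConvexOn ℝ I φ) {u v l : ℝ}
    (hu : u ∈ I) (hv : v ∈ I) (hl : l ∈ Set.Icc (0:ℝ) 1) :
    φ (l * u + (1 - l) * v) ≤ l * φ u + (1 - l) * φ v := by
  have := h.2 hu hv hl.1 (by linarith [hl.2] : (0:ℝ) ≤ 1 - l) (by ring : l + (1 - l) = 1)
  simpa [smul_eq_mul] using this

lemma coordHH (a b c d : ℝ) (hab : a < b) (hcd : c < d) (h : ℝ → ℝ → ℝ)
    (hconv : CoordConvexOn a b c d h)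
    (hint : IntegrableOn (fun q : ℝ × ℝ => h q.1 q.2) (Set.Icc a b ×ˢ Set.Icc c d)) :
    ∫ q in Set.Icc a b ×ˢ Set.Icc c d, h q.1 q.2 ≤
      (b - a) * (d - c) * (h a c + h a d + h b c + h b d) / 4 := by
  set t : ℝ → ℝ := fun x => (b - x) / (b - a) with ht
  set s : ℝ → ℝ := fun y => (d - y) / (d - c) with hs
  set P : ℝ → ℝ := fun x => t x * h a c + (1 - t x) * h b c with hP
  set Q : ℝ → ℝ := fun x => t x * h a d + (1 - t x) * h b d with hQ
  set B : ℝ × ℝ → ℝ := fun q => P q.1 * s q.2 + Q q.1 * (1 - s q.2) with hB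
  have hBcont : Continuous B := by
    apply Continuous.add
    · exact (((tcont a b).mul continuous_const).add
        ((continuous_const.sub (tcont a b)).mul continuous_const)).comp continuous_fst |>.mul
        ((tcont c d).comp continuous_snd)
    · exact (((tcont a b).mul continuous_const).add
        ((continuous_const.sub (tcont a b)).mul continuous_const)).comp continuous_fst |>.mul
        ((continuous_const.sub (tcont c d)).comp continuous_snd)
  have hK : IsCompact (Set.Icc a b ×ˢ Set.Icc c d) := isCompact_Icc.prod isCompact_Icc
  have hBint : IntegrableOn B (Set.Icc a b ×ˢ Set.Icc c d) :=
    hBcont.continuousOn.integrableOn_compact hK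
  have hmono : ∀ q ∈ Set.Icc a b ×ˢ Set.Icc c d, h q.1 q.2 ≤ B q := by
    rintro ⟨x, y⟩ ⟨hx, hy⟩
    obtain ⟨htx, hxe⟩ := tmem hab hx
    obtain ⟨hsy, hye⟩ := tmem hcd hy
    have h1 : h x y ≤ t x * h a y + (1 - t x) * h b y := by
      have := convex_slice (hconv.1 y hy) (Set.left_mem_Icc.2 hab.le)
        (Set.right_mem_Icc.2 hab.le) htx
      rwa [hxe] at this
    have h2 : h a y ≤ s y * h a c + (1 - s y) * h a d := by
      have := convex_slice (hconv.2 a (Set.left_mem_Icc.2 hab.le)) (Set.left_mem_Icc.2 hcd.le)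
        (Set.right_mem_Icc.2 hcd.le) hsy
      rwa [hye] at this
    have h3 : h b y ≤ s y * h b c + (1 - s y) * h b d := by
      have := convex_slice (hconv.2 b (Set.right_mem_Icc.2 hab.le)) (Set.left_mem_Icc.2 hcd.le)
        (Set.right_mem_Icc.2 hcd.le) hsy
      rwa [hye] at this
    have htx0 := htx.1
    have htx1 := htx.2
    simp only [hB, hP, hQ]
    nlinarith [mul_le_mul_of_nonneg_left h2 htx.1,
      mul_le_mul_of_nonneg_left h3 (by linarith [htx.2] : (0:ℝ) ≤ 1 - t x)]
  have hle := MeasureTheory.setIntegral_mono_on hint hBint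
    (measurableSet_Icc.prod measurableSet_Icc) hmono
  refine hle.trans_eq ?_
  -- compute ∫ B
  have hPint : Integrable P (volume.restrict (Set.Icc a b)) := by
    exact (((tcont a b).mul continuous_const).add
      ((continuous_const.sub (tcont a b)).mul continuous_const)).continuousOn.integrableOn_compact
      isCompact_Icc
  have hQint : Integrable Q (volume.restrict (Set.Icc a b)) := by
    exact (((tcont a b).mul continuous_const).add
      ((continuous_const.sub (tcont a b)).mul continuous_const)).continuousOn.integrableOn_compact
      isCompact_Icc
  have h1t : Integrable (fun x : ℝ => 1 - t x) (volume.restrict (Set.Icc a b)) :=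
    (integrable_const 1).sub (tInt a b)
  have hsint : Integrable s (volume.restrict (Set.Icc c d)) := tInt c d
  have hs'int : Integrable (fun y => 1 - s y) (volume.restrict (Set.Icc c d)) :=
    (integrable_const 1).sub hsint
  have hPi : ∫ x in Set.Icc a b, P x = (b - a) / 2 * (h a c + h b c) := by
    rw [hP]
    simp only
    rw [MeasureTheory.integral_add ((tInt a b).mul_const _) (h1t.mul_const _),
      MeasureTheory.integral_mul_const _, MeasureTheory.integral_mul_const _, oneD a b hab,
      oneD' a b hab]
    ring
  have hQi : ∫ x in Set.Icc a b, Q x = (b - a) / 2 * (h a d + h b d) := by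
    rw [hQ]
    simp only
    rw [MeasureTheory.integral_add ((tInt a b).mul_const _) (h1t.mul_const _),
      MeasureTheory.integral_mul_const _, MeasureTheory.integral_mul_const _, oneD a b hab,
      oneD' a b hab]
    ring
  have hsi : ∫ y in Set.Icc c d, s y = (d - c) / 2 := oneD c d hcd
  have hs'i : ∫ y in Set.Icc c d, (1 - s y) = (d - c) / 2 := oneD' c d hcd
  have key : (volume : Measure (ℝ × ℝ)).restrict (Set.Icc a b ×ˢ Set.Icc c d) =
      (volume.restrict (Set.Icc a b)).prod (volume.restrict (Set.Icc c d)) := by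
    rw [Measure.prod_restrict, ← Measure.volume_eq_prod]
  have hBint' : Integrable B
      ((volume.restrict (Set.Icc a b)).prod (volume.restrict (Set.Icc c d))) := by
    rw [← key]; exact hBint
  rw [key, hB]
  simp only
  rw [MeasureTheory.integral_add (hPint.mul_prod hsint) (hQint.mul_prod hs'int),
    MeasureTheory.integral_prod_mul P s, MeasureTheory.integral_prod_mul Q (fun y => 1 - s y),
    hPi, hQi, hsi, hs'i]
  ring

lemma iter_eq (a b c d : ℝ) (hab : a ≤ b) (hcd : c ≤ d) (h : ℝ → ℝ → ℝ)
    (hint : IntegrableOn (fun q : ℝ × ℝ => h q.1 q.2) (Set.Icc a b ×ˢ Set.Icc c d)) :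
    (∫ x in a..b, ∫ y in c..d, h x y) = ∫ q in Set.Icc a b ×ˢ Set.Icc c d, h q.1 q.2 := by
  have key : (volume : Measure (ℝ × ℝ)).restrict (Set.Icc a b ×ˢ Set.Icc c d) =
      (volume.restrict (Set.Icc a b)).prod (volume.restrict (Set.Icc c d)) := by
    rw [Measure.prod_restrict, ← Measure.volume_eq_prod]
  have hint' : Integrable (fun q : ℝ × ℝ => h q.1 q.2)
      ((volume.restrict (Set.Icc a b)).prod (volume.restrict (Set.Icc c d))) := by
    rw [← key]; exact hint
  rw [key, MeasureTheory.integral_prod _ hint']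
  simp only [intervalIntegral.integral_of_le hab, intervalIntegral.integral_of_le hcd,
    ← MeasureTheory.integral_Icc_eq_integral_Ioc]

lemma dom_convex {I : Set ℝ} {ψ φ : ℝ → ℝ} (hI : Convex ℝ I) (h : ConvexDominated I ψ φ) :
    ConvexOn ℝ I (fun x => ψ x + φ x) ∧ ConvexOn ℝ I (fun x => ψ x - φ x) := by
  constructor <;>
  · refine ⟨hI, fun u hu v hv la lb hla hlb hsum => ?_⟩
    have hd := h u hu v hv la ⟨hla, by linarith⟩
    rw [abs_le] at hd
    have hb : lb = 1 - la := by linarith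
    subst hb
    simp only [smul_eq_mul]
    obtain ⟨hd1, hd2⟩ := hd
    linarith

theorem stmt12 (a b c d : ℝ) (hab : a < b) (hcd : c < d) (g f : ℝ → ℝ → ℝ)
    (hg : CoordConvexOn a b c d g) (hdom : CoordConvexDominated a b c d g f)
    (hfint : IntegrableOn (fun q : ℝ × ℝ => f q.1 q.2) (Set.Icc a b ×ˢ Set.Icc c d))
    (hgint : IntegrableOn (fun q : ℝ × ℝ => g q.1 q.2) (Set.Icc a b ×ˢ Set.Icc c d)) :
    |(f a c + f a d + f b c + f b d) / 4 -
        (1 / ((b - a) * (d - c))) * (∫ x in a..b, ∫ y in c..d, f x y)| ≤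
      (g a c + g a d + g b c + g b d) / 4 -
        (1 / ((b - a) * (d - c))) * (∫ x in a..b, ∫ y in c..d, g x y) := by
  have hIab : Convex ℝ (Set.Icc a b) := convex_Icc a b
  have hIcd : Convex ℝ (Set.Icc c d) := convex_Icc c d
  have hsum : CoordConvexOn a b c d (fun x y => g x y + f x y) := by
    constructor
    · exact fun y hy => (dom_convex hIab (hdom.2 y hy)).1
    · exact fun x hx => (dom_convex hIcd (hdom.1 x hx)).1
  have hdiff : CoordConvexOn a b c d (fun x y => g x y - f x y) := by
    constructor
    · exact fun y hy => (dom_convex hIab (hdom.2 y hy)).2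
    · exact fun x hx => (dom_convex hIcd (hdom.1 x hx)).2
  have hsint : IntegrableOn (fun q : ℝ × ℝ => g q.1 q.2 + f q.1 q.2)
      (Set.Icc a b ×ˢ Set.Icc c d) := hgint.add hfint
  have hdint : IntegrableOn (fun q : ℝ × ℝ => g q.1 q.2 - f q.1 q.2)
      (Set.Icc a b ×ˢ Set.Icc c d) := hgint.sub hfint
  have H1 := coordHH a b c d hab hcd (fun x y => g x y + f x y) hsum hsint
  have H2 := coordHH a b c d hab hcd (fun x y => g x y - f x y) hdiff hdint
  have e1 : ∫ q in Set.Icc a b ×ˢ Set.Icc c d, (g q.1 q.2 + f q.1 q.2) =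
      (∫ q in Set.Icc a b ×ˢ Set.Icc c d, g q.1 q.2) +
        ∫ q in Set.Icc a b ×ˢ Set.Icc c d, f q.1 q.2 :=
    MeasureTheory.integral_add hgint hfint
  have e2 : ∫ q in Set.Icc a b ×ˢ Set.Icc c d, (g q.1 q.2 - f q.1 q.2) =
      (∫ q in Set.Icc a b ×ˢ Set.Icc c d, g q.1 q.2) -
        ∫ q in Set.Icc a b ×ˢ Set.Icc c d, f q.1 q.2 :=
    MeasureTheory.integral_sub hgint hfint
  rw [e1] at H1
  rw [e2] at H2
  rw [iter_eq a b c d hab.le hcd.le f hfint, iter_eq a b c d hab.le hcd.le g hgint]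
  set If := ∫ q in Set.Icc a b ×ˢ Set.Icc c d, f q.1 q.2 with hIf
  set Ig := ∫ q in Set.Icc a b ×ˢ Set.Icc c d, g q.1 q.2 with hIg
  have hA : (0:ℝ) < (b - a) * (d - c) := by
    apply mul_pos <;> linarith
  have hA' : (b - a) * (d - c) ≠ 0 := ne_of_gt hA
  have hu : (0:ℝ) ≤ 1 / ((b - a) * (d - c)) := by positivity
  have K1 : (1 / ((b - a) * (d - c))) * Ig + (1 / ((b - a) * (d - c))) * If ≤
      ((g a c + f a c) + (g a d + f a d) + (g b c + f b c) + (g b d + f b d)) / 4 := by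
    have := mul_le_mul_of_nonneg_left H1 hu
    rw [mul_add] at this
    refine this.trans_eq ?_
    field_simp
    exact mul_div_cancel_left₀ _ hA'
  have K2 : (1 / ((b - a) * (d - c))) * Ig - (1 / ((b - a) * (d - c))) * If ≤
      ((g a c - f a c) + (g a d - f a d) + (g b c - f b c) + (g b d - f b d)) / 4 := by
    have := mul_le_mul_of_nonneg_left H2 hu
    rw [mul_sub] at this
    refine this.trans_eq ?_
    field_simp
    exact mul_div_cancel_left₀ _ hA'
  rw [abs_le]
  constructor
  · linarith
  · linarith
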